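/- Let L be the 8-element lattice consisting of six atoms a, b₁, b₂, b₃, b₄, c, a top element 1 and a bottom element 0 (distinct atoms have meet 0 and join 1). Define the ternary operation f on L by f(x,y,z) = (x ⊔ y) ⊓ (x ⊔ z) ⊓ (y ⊔ z). Then: (1) the 7-element subset L \ {0} is closed under f; (2) f is a majority operation on L \ {0}, i.e. f(x,x,y) = f(x,y,x) = f(y,x,x) = x for all x, y ∈ L \ {0}; and (3) the tolerance Θ on L \ {0}, defined as the smallest reflexive symmetric relation with 1 Θ x for all x, a Θ bᵢ and bᵢ Θ c for i = 1,2,3,4, is compatible with f but is not representable: there is no reflexive relation R on L \ {0} compatible with f such that Θ = R ∘ R⁻¹. -/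

import Mathlib

/-- The join of the 8-element lattice `Fin 8` with bottom `0`, top `7` and the
six atoms `1,…,6` pairwise incomparable. -/
def sup8 : Fin 8 → Fin 8 → Fin 8 := fun x y =>
  if x = y then x else if x = 0 then y else if y = 0 then x else 7

/-- The meet of the 8-element lattice `Fin 8`. -/
def inf8 : Fin 8 → Fin 8 → Fin 8 := fun x y =>
  if x = y then x else if x = 7 then y else if y = 7 then x else 0

/-- The median operation `f(x,y,z) = (x ⊔ y) ⊓ (x ⊔ z) ⊓ (y ⊓ z)` on the
8-element lattice. -/
def f8 (x y z : Fin 8) : Fin 8 := inf8 (inf8 (sup8 x y) (sup8 x z)) (sup8 y z)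

/-- Part (1) of STATEMENT 5: the 7-element subset `L \ {0}` is closed
under `f8`. -/
theorem f8_ne_zero : ∀ x y z : Fin 8, x ≠ 0 → y ≠ 0 → z ≠ 0 → f8 x y z ≠ 0 := by
  decide

/-- The 7-element algebra `L \ {0}`. -/
def L7 : Type := {x : Fin 8 // x ≠ 0}

/-- The induced majority operation on `L \ {0}`. -/
def f7 (x y z : L7) : L7 := ⟨f8 x.1 y.1 z.1, f8_ne_zero x.1 y.1 z.1 x.2 y.2 z.2⟩

/-- The tolerance on `L \ {0}` (with `a = 1`, `bᵢ = i + 1` for `i = 1,…,4`,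
`c = 6`, top `= 7`): the smallest reflexive symmetric relation with
`7 Θ x` for all `x`, `a Θ bᵢ` and `bᵢ Θ c` for `i = 1,…,4`. -/
def Theta8 : L7 → L7 → Prop := fun x y =>
  x = y ∨ x.1 = 7 ∨ y.1 = 7 ∨
  ∃ i ∈ ({2, 3, 4, 5} : Set (Fin 8)),
    ({x.1, y.1} : Set (Fin 8)) = ({1, i} : Set (Fin 8)) ∨
    ({x.1, y.1} : Set (Fin 8)) = ({i, 6} : Set (Fin 8))

/-- (1) `L \ {0}` is closed under the median operation `f8`;
(2) the induced operation `f7` is a majority operation on `L \ {0}`;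
(3) the tolerance `Theta8` is reflexive, symmetric and compatible with `f7`,
but is not representable: there is no reflexive relation `R` compatible with
`f7` such that `Theta8 = R ∘ R⁻¹`. -/
def T8 (x y : Fin 8) : Prop := x = y ∨ x = 7 ∨ y = 7 ∨
  ((x = 1 ∨ x = 6) ∧ (y = 2 ∨ y = 3 ∨ y = 4 ∨ y = 5)) ∨
  ((y = 1 ∨ y = 6) ∧ (x = 2 ∨ x = 3 ∨ x = 4 ∨ x = 5))
instance : DecidableRel T8 := fun x y => by unfold T8; infer_instance
lemma theta_iff (x y : L7) : Theta8 x y ↔ T8 x.1 y.1 := by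
  obtain ⟨x, hx⟩ := x
  obtain ⟨y, hy⟩ := y
  have h1 : ((⟨x, hx⟩ : L7) = ⟨y, hy⟩) ↔ x = y :=
    ⟨fun h => congrArg Subtype.val h, by rintro rfl; rfl⟩
  simp only [Theta8, T8, Set.mem_insert_iff, Set.mem_singleton_iff,
    Set.pair_eq_pair_iff, h1]
  refine Iff.trans (or_congr_left h1) ?_
  clear h1 hx hy
  revert x y
  decide
set_option maxHeartbeats 4000000 in
lemma compat7 : ∀ x x' y y' z z' : Fin 7,
    T8 x.succ x'.succ → T8 y.succ y'.succ → T8 z.succ z'.succ →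
    T8 (f8 x.succ y.succ z.succ) (f8 x'.succ y'.succ z'.succ) := by decide
lemma maj8 : ∀ x y : Fin 8, f8 x x y = x ∧ f8 x y x = x ∧ f8 y x x = x := by decide

lemma compatL (x y z x' y' z' : Fin 8) (hx : x ≠ 0) (hy : y ≠ 0) (hz : z ≠ 0)
    (hx' : x' ≠ 0) (hy' : y' ≠ 0) (hz' : z' ≠ 0) :
    T8 x x' → T8 y y' → T8 z z' → T8 (f8 x y z) (f8 x' y' z') := by
  have := compat7 (x.pred hx) (x'.pred hx') (y.pred hy)
    (y'.pred hy') (z.pred hz) (z'.pred hz')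
  simpa [Fin.succ_pred] using this

lemma t8_symm : ∀ x y : Fin 8, T8 x y → T8 y x := by decide

def aE : L7 := ⟨1, by decide⟩
def cE : L7 := ⟨6, by decide⟩
def tE : L7 := ⟨7, by decide⟩

lemma hbT : ∀ v : Fin 8, (v = 2 ∨ v = 3 ∨ v = 4) → T8 1 v ∧ T8 v 6 := by decide

lemma nT16 : ¬ T8 1 6 := by decide

lemma commonA : ∀ v z : Fin 8, z ≠ 0 → (v = 2 ∨ v = 3 ∨ v = 4) →
    T8 1 z → T8 v z → z = 1 ∨ z = v ∨ z = 7 := by decide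

lemma commonC : ∀ v z : Fin 8, z ≠ 0 → (v = 2 ∨ v = 3 ∨ v = 4) →
    T8 v z → T8 6 z → z = v ∨ z = 6 ∨ z = 7 := by decide

lemma med1 : ∀ v : Fin 8, (v = 2 ∨ v = 3 ∨ v = 4) →
    f8 7 v 1 = 7 ∧ f8 7 v 6 = 7 := by decide

theorem theta8_not_representable :
    (∀ x y z : Fin 8, x ≠ 0 → y ≠ 0 → z ≠ 0 → f8 x y z ≠ 0) ∧
    (∀ x y : L7, f7 x x y = x ∧ f7 x y x = x ∧ f7 y x x = x) ∧
    ((∀ x, Theta8 x x) ∧ (∀ x y, Theta8 x y → Theta8 y x) ∧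
     (∀ x y z x' y' z', Theta8 x x' → Theta8 y y' → Theta8 z z' →
        Theta8 (f7 x y z) (f7 x' y' z'))) ∧
    ¬ ∃ R : L7 → L7 → Prop,
        (∀ x, R x x) ∧
        (∀ x y z x' y' z', R x x' → R y y' → R z z' →
          R (f7 x y z) (f7 x' y' z')) ∧
        (∀ x y, Theta8 x y ↔ ∃ z, R x z ∧ R y z) := by
  refine ⟨f8_ne_zero, ?_, ⟨?_, ?_, ?_⟩, ?_⟩
  · intro x y
    exact ⟨Subtype.ext (maj8 x.1 y.1).1, Subtype.ext (maj8 x.1 y.1).2.1,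
      Subtype.ext (maj8 x.1 y.1).2.2⟩
  · intro x; exact Or.inl rfl
  · intro x y h
    exact (theta_iff y x).mpr (t8_symm x.1 y.1 ((theta_iff x y).mp h))
  · intro x y z x' y' z' h1 h2 h3
    exact (theta_iff _ _).mpr (compatL x.1 y.1 z.1 x'.1 y'.1 z'.1
      x.2 y.2 z.2 x'.2 y'.2 z'.2
      ((theta_iff _ _).mp h1) ((theta_iff _ _).mp h2) ((theta_iff _ _).mp h3))
  · rintro ⟨R, hrefl, hcomp, hiff⟩
    have hRT : ∀ x y : L7, R x y → T8 x.1 y.1 := fun x y h =>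
      (theta_iff x y).mp ((hiff x y).mpr ⟨y, h, hrefl y⟩)
    have hac : ¬ Theta8 aE cE := fun h => nT16 ((theta_iff _ _).mp h)
    -- key lemma: for each atom b ∈ {2,3,4}, R b aE or R b cE
    have key : ∀ b : L7, (b.1 = 2 ∨ b.1 = 3 ∨ b.1 = 4) → R b aE ∨ R b cE := by
      intro b hb
      have θab : Theta8 aE b := (theta_iff aE b).mpr (hbT b.1 hb).1
      have θbc : Theta8 b cE := (theta_iff b cE).mpr (hbT b.1 hb).2
      obtain ⟨z, haz, hbz⟩ := (hiff aE b).mp θab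
      have hz : z.1 = 1 ∨ z.1 = b.1 ∨ z.1 = 7 :=
        commonA b.1 z.1 z.2 hb (hRT aE z haz) (hRT b z hbz)
      rcases hz with h | h | h
      · -- z = aE : R b aE
        exact Or.inl ((Subtype.ext h : z = aE) ▸ hbz)
      · -- z = b : R aE b
        have hab : R aE b := (Subtype.ext h : z = b) ▸ haz
        obtain ⟨w, hbw, hcw⟩ := (hiff b cE).mp θbc
        have hw : w.1 = b.1 ∨ w.1 = 6 ∨ w.1 = 7 :=
          commonC b.1 w.1 w.2 hb (hRT b w hbw) (hRT cE w hcw)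
        rcases hw with h' | h' | h'
        · -- w = b : R cE b, contradiction with R aE b
          exact absurd ((hiff aE cE).mpr ⟨b, hab, (Subtype.ext h' : w = b) ▸ hcw⟩) hac
        · -- w = cE : R b cE
          exact Or.inr ((Subtype.ext h' : w = cE) ▸ hbw)
        · -- w = tE : R cE tE; from R aE b derive R aE tE, contradiction
          have hct : R cE tE := (Subtype.ext h' : w = tE) ▸ hcw
          have h1 := hcomp cE aE aE tE b aE hct hab (hrefl aE)
          have e1 : f7 cE aE aE = aE := Subtype.ext (by decide)
          have e2 : f7 tE b aE = tE := Subtype.ext ((med1 b.1 hb).1)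
          rw [e1, e2] at h1
          exact absurd ((hiff aE cE).mpr ⟨tE, h1, hct⟩) hac
      · -- z = tE : R aE tE and R b tE
        have hat : R aE tE := (Subtype.ext h : z = tE) ▸ haz
        obtain ⟨w, hbw, hcw⟩ := (hiff b cE).mp θbc
        have hw : w.1 = b.1 ∨ w.1 = 6 ∨ w.1 = 7 :=
          commonC b.1 w.1 w.2 hb (hRT b w hbw) (hRT cE w hcw)
        rcases hw with h' | h' | h'
        · -- w = b : R cE b; derive R cE tE, contradiction
          have hcb : R cE b := (Subtype.ext h' : w = b) ▸ hcw
          have h1 := hcomp aE cE cE tE b cE hat hcb (hrefl cE)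
          have e1 : f7 aE cE cE = cE := Subtype.ext (by decide)
          have e2 : f7 tE b cE = tE := Subtype.ext ((med1 b.1 hb).2)
          rw [e1, e2] at h1
          exact absurd ((hiff aE cE).mpr ⟨tE, hat, h1⟩) hac
        · -- w = cE : R b cE
          exact Or.inr ((Subtype.ext h' : w = cE) ▸ hbw)
        · -- w = tE : R cE tE, contradiction with R aE tE
          have hct : R cE tE := (Subtype.ext h' : w = tE) ▸ hcw
          exact absurd ((hiff aE cE).mpr ⟨tE, hat, hct⟩) hac
    -- pigeonhole among b = 2, 3, 4
    have h2 := key ⟨2, by decide⟩ (Or.inl rfl)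
    have h3 := key ⟨3, by decide⟩ (Or.inr (Or.inl rfl))
    have h4 := key ⟨4, by decide⟩ (Or.inr (Or.inr rfl))
    have ne23 : ¬ Theta8 ⟨2, by decide⟩ ⟨3, by decide⟩ :=
      fun h => by have := (theta_iff _ _).mp h; revert this; decide
    have ne24 : ¬ Theta8 ⟨2, by decide⟩ ⟨4, by decide⟩ :=
      fun h => by have := (theta_iff _ _).mp h; revert this; decide
    have ne34 : ¬ Theta8 ⟨3, by decide⟩ ⟨4, by decide⟩ :=
      fun h => by have := (theta_iff _ _).mp h; revert this; decide
    rcases h2 with h2 | h2 <;> rcases h3 with h3 | h3 <;> rcases h4 with h4 | h4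
    · exact ne23 ((hiff _ _).mpr ⟨aE, h2, h3⟩)
    · exact ne23 ((hiff _ _).mpr ⟨aE, h2, h3⟩)
    · exact ne24 ((hiff _ _).mpr ⟨aE, h2, h4⟩)
    · exact ne34 ((hiff _ _).mpr ⟨cE, h3, h4⟩)
    · exact ne34 ((hiff _ _).mpr ⟨aE, h3, h4⟩)
    · exact ne24 ((hiff _ _).mpr ⟨cE, h2, h4⟩)
    · exact ne23 ((hiff _ _).mpr ⟨cE, h2, h3⟩)
    · exact ne23 ((hiff _ _).mpr ⟨cE, h2, h3⟩)
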